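/- arXiv:2309.07716 — 3 statements merged into one kernel-verified Lean document; each statement's English description precedes it below -/
import Mathlib

section
/- A vector-valued dense layer y = ψ(Wx + b), where W ∈ V^{M×N}, b ∈ V^M, and ψ is a split activation derived from ψ_ℝ, is emulated exactly by the real-valued dense layer φ(y) = ψ_ℝ(M_L(W)φ(x) + φ(b)). -/
open Matrix BigOperators

/-- A vector-valued dense layer `y = ψ(Wx + b)` with split activation
`ψ` derived from `ψℝ` is emulated exactly by the real-valued dense layer
`φ(y) = ψℝ(M_L(W) φ(x) + φ(b))`. -/
theorem stmt_17 {n M N : ℕ} {V : Type*} [AddCommGroup V] [Module ℝ V]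
    (e : Module.Basis (Fin n) ℝ V) (mul : V →ₗ[ℝ] V →ₗ[ℝ] V)
    (ψℝ : ℝ → ℝ) (ψ : V → V)
    (hψ : ∀ x, ψ x = ∑ i, ψℝ (e.repr x i) • e i)
    (W : Matrix (Fin M) (Fin N) V) (b : Fin M → V) (x : Fin N → V)
    (y : Fin M → V)
    (hy : ∀ i, y i = ψ (∑ j, mul (W i j) (x j) + b i))
    (MLW : Matrix (Fin M × Fin n) (Fin N × Fin n) ℝ)
    (hMLW : ∀ i k j c, MLW (i, k) (j, c) = e.repr (mul (W i j) (e c)) k)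
    (φx : Fin N × Fin n → ℝ) (hφx : ∀ j c, φx (j, c) = e.repr (x j) c) :
    ∀ i k, e.repr (y i) k = ψℝ (MLW.mulVec φx (i, k) + e.repr (b i) k) := by
  intro i k
  rw [hy, hψ]
  have h1 : (e.repr (∑ i', ψℝ (e.repr (∑ j, mul (W i j) (x j) + b i) i') • e i')) k
      = ψℝ ((e.repr (∑ j, mul (W i j) (x j) + b i)) k) := by
    simp [Finsupp.single_apply]
  rw [h1]
  congr 1
  rw [map_add, Finsupp.add_apply]
  congr 1
  rw [Matrix.mulVec, dotProduct, Fintype.sum_prod_type]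
  rw [map_sum, Finsupp.coe_finset_sum, Finset.sum_apply]
  refine Finset.sum_congr rfl fun j _ => ?_
  conv_lhs => rw [← e.sum_repr (x j)]
  rw [map_sum, map_sum, Finsupp.coe_finset_sum, Finset.sum_apply]
  refine Finset.sum_congr rfl fun c _ => ?_
  rw [hMLW, hφx, LinearMap.map_smul]
  simp [mul_comm]
end

section
/- In a finite-dimensional real algebra, the k-th coordinate of the sum s_i = Σ_j w_{ij} x_j satisfies s_{ki} = Σ_j φ(w_{ij})^T B_k φ(x_j); consequently the k-th component of a vector-valued dense layer output with split activation equals the output of a real-valued dense layer applied to the flattened input φ(x) ∈ ℝ^{nN}. -/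
open Matrix BigOperators

/-- The `k`-th coordinate of `s i = ∑ j, w i j * x j` satisfies
`s_{k i} = ∑ j, φ(w i j)ᵀ B_k φ(x j)`; consequently the `k`-th component of a
vector-valued dense layer output with split activation equals the output of a
real-valued dense layer applied to the flattened input `φ(x) ∈ ℝ^{nN}`. -/
theorem stmt_18 {n M N : ℕ} {V : Type*} [AddCommGroup V] [Module ℝ V]
    (e : Module.Basis (Fin n) ℝ V) (mul : V →ₗ[ℝ] V →ₗ[ℝ] V)
    (B : Fin n → Matrix (Fin n) (Fin n) ℝ)
    (hB : ∀ (k : Fin n) (a b : V),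
      e.repr (mul a b) k = (fun i => e.repr a i) ⬝ᵥ (B k).mulVec (fun j => e.repr b j))
    (w : Matrix (Fin M) (Fin N) V) (x : Fin N → V) (bias : Fin M → V)
    (s : Fin M → V) (hs : ∀ i, s i = ∑ j, mul (w i j) (x j))
    (ψℝ : ℝ → ℝ) (ψ : V → V)
    (hψ : ∀ v, ψ v = ∑ i, ψℝ (e.repr v i) • e i)
    (y : Fin M → V) (hy : ∀ i, y i = ψ (s i + bias i))
    (φx : Fin N × Fin n → ℝ) (hφx : ∀ j c, φx (j, c) = e.repr (x j) c)
    (k : Fin n) :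
    (∀ i, e.repr (s i) k =
        ∑ j, (fun c => e.repr (w i j) c) ⬝ᵥ (B k).mulVec (fun c => e.repr (x j) c)) ∧
    ∃ What : Matrix (Fin M) (Fin N × Fin n) ℝ,
      ∀ i, e.repr (y i) k = ψℝ (What.mulVec φx i + e.repr (bias i) k) := by
  have hsk : ∀ i, e.repr (s i) k =
      ∑ j, (fun c => e.repr (w i j) c) ⬝ᵥ (B k).mulVec (fun c => e.repr (x j) c) := by
    intro i
    rw [hs i, map_sum, Finsupp.finset_sum_apply]
    exact Finset.sum_congr rfl fun j _ => hB k _ _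
  refine ⟨hsk, ⟨fun i p => ∑ d, e.repr (w i p.1) d * B k d p.2, fun i => ?_⟩⟩
  have hψk : ∀ v : V, e.repr (ψ v) k = ψℝ (e.repr v k) := by
    intro v
    rw [hψ v, map_sum, Finsupp.finset_sum_apply]
    simp [Finsupp.single_apply]
  have hmv : Matrix.mulVec (fun i p => ∑ d, e.repr (w i p.1) d * B k d p.2) φx i
      = e.repr (s i) k := by
    rw [hsk i]
    simp only [Matrix.mulVec, dotProduct, Fintype.sum_prod_type]
    refine Finset.sum_congr rfl fun j _ => ?_
    simp only [hφx, Finset.sum_mul, Finset.mul_sum, mul_assoc]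
    rw [Finset.sum_comm]
  rw [hy i, hψk, hmv, map_add, Finsupp.add_apply]
end

section
/- For any vector-valued matrix A ∈ V^{M×L} and B ∈ V^{L×N}, the product AB can be recovered as AB = φ^{-1}((Σ_k A_k ⊗ P_k^T) φ(B)), where A = Σ_k A_k e_k. -/
open Matrix BigOperators Kronecker

/-- For vector-valued matrices `A ∈ V^{M×L}` and `B ∈ V^{L×N}`, the
product `AB` is recovered as `AB = φ⁻¹((∑ k, A_k ⊗ₖ P_kᵀ) φ(B))`, i.e. the real
block representation of `AB` equals `(∑ k, A_k ⊗ₖ P_kᵀ) * φ(B)`. -/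
theorem stmt_19 {n M L N : ℕ} {V : Type*} [AddCommGroup V] [Module ℝ V]
    (e : Module.Basis (Fin n) ℝ V) (mul : V →ₗ[ℝ] V →ₗ[ℝ] V)
    (A : Matrix (Fin M) (Fin L) V) (B : Matrix (Fin L) (Fin N) V)
    (C : Matrix (Fin M) (Fin N) V)
    (hC : ∀ i j, C i j = ∑ ℓ, mul (A i ℓ) (B ℓ j))
    (Ak : Fin n → Matrix (Fin M) (Fin L) ℝ)
    (hAk : ∀ i ℓ, A i ℓ = ∑ k, Ak k i ℓ • e k)
    (P : Fin n → Matrix (Fin n) (Fin n) ℝ)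
    (hP : ∀ k, P k = Matrix.of fun l j => e.repr (mul (e k) (e j)) l)
    (φB : Matrix (Fin L × Fin n) (Fin N) ℝ)
    (hφB : ∀ ℓ c j, φB (ℓ, c) j = e.repr (B ℓ j) c) :
    (Matrix.of fun q j => e.repr (C q.1 j) q.2 :
        Matrix (Fin M × Fin n) (Fin N) ℝ) = (∑ k, Ak k ⊗ₖ P k) * φB := by
  ext ⟨i, c⟩ j
  have hB : ∀ ℓ j, B ℓ j = ∑ d, e.repr (B ℓ j) d • e d := by
    intro ℓ j; exact (e.sum_repr (B ℓ j)).symm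
  simp only [Matrix.of_apply, Matrix.mul_apply, Matrix.sum_apply,
    Matrix.kroneckerMap_apply, hC, hP, hφB]
  rw [map_sum, Fintype.sum_prod_type]
  simp only [Finsupp.coe_finset_sum, Finset.sum_apply]
  refine Finset.sum_congr rfl fun ℓ _ => ?_
  conv_lhs => rw [hAk, hB]
  simp [Finset.mul_sum, Finset.sum_mul, mul_comm, mul_assoc, mul_left_comm]
  conv_rhs => rw [Finset.sum_comm]
  refine Finset.sum_congr rfl fun k _ => ?_
  rw [← Finset.mul_sum]
  congr 1
  conv_lhs => rw [hB ℓ j]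
  simp only [map_sum, map_smul, Finsupp.coe_finset_sum, Finset.sum_apply,
    LinearMap.smul_apply, Finsupp.smul_apply, smul_eq_mul]
end
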